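/- Let (Ω, F, P) be a probability space. Let (Y_n)_{n≥1} be a sequence of nonnegative square-integrable random variables such that E[Y_n] = m for every n (for some constant m ≥ 0), Var(Y_n) ≤ C for every n (for some constant C), and for every ε > 0 there exists K such that |Cov(Y_i, Y_j)| ≤ ε whenever |i − j| ≥ K. Let D be a nonnegative integrable random variable. Then ((Σ_{n=1}^{N} Y_n + D) / N)² converges to m² in probability as N → ∞. -/

import Mathlib

open MeasureTheory ProbabilityTheory Filter Finset
open scoped ProbabilityTheory
open scoped ENNReal

/-- Covariance `Cov(X, Y) = E[X Y] − E[X] E[Y]` of real random variables on a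
probability space. -/
noncomputable def cov {Ω : Type*} [MeasureSpace Ω] (X Y : Ω → ℝ) : ℝ :=
  (∫ ω, X ω * Y ω) - (∫ ω, X ω) * (∫ ω, Y ω)

section auxCH
set_option linter.unusedSectionVars false
variable {Ω : Type*} [MeasureSpace Ω] [IsProbabilityMeasure (ℙ : Measure Ω)]

lemma integrable_mul_of_memL2' {f g : Ω → ℝ} (hf : MemLp f 2 ℙ) (hg : MemLp g 2 ℙ) :
    Integrable (fun ω => f ω * g ω) ℙ := by
  have h : Integrable (fun ω => (f ω ^ 2 + g ω ^ 2) / 2) ℙ :=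
    (hf.integrable_sq.add hg.integrable_sq).div_const 2
  refine h.mono' (hf.aestronglyMeasurable.mul hg.aestronglyMeasurable) ?_
  filter_upwards with ω
  rw [Real.norm_eq_abs, abs_mul]
  nlinarith [sq_nonneg (|f ω| - |g ω|), sq_abs (f ω), sq_abs (g ω),
    abs_nonneg (f ω), abs_nonneg (g ω)]

lemma cov_eq_integral' {f g : Ω → ℝ} (hf : MemLp f 2 ℙ) (hg : MemLp g 2 ℙ) :
    cov f g = ∫ ω, (f ω - ∫ ω', f ω') * (g ω - ∫ ω', g ω') := by
  have hfg := integrable_mul_of_memL2' hf hg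
  have hfi := hf.integrable one_le_two
  have hgi := hg.integrable one_le_two
  rw [cov]
  set a := ∫ ω, f ω
  set b := ∫ ω, g ω
  have hptw : (fun ω => (f ω - a) * (g ω - b))
      = fun ω => f ω * g ω - a * g ω - b * f ω + a * b := by
    funext ω; ring
  have h1 : Integrable (fun ω => f ω * g ω - a * g ω) ℙ := hfg.sub (hgi.const_mul a)
  have h2 : Integrable (fun ω => f ω * g ω - a * g ω - b * f ω) ℙ :=
    h1.sub (hfi.const_mul b)
  rw [hptw, integral_add h2 (integrable_const _), integral_sub h1 (hfi.const_mul b),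
    integral_sub hfg (hgi.const_mul a), integral_const_mul, integral_const_mul,
    integral_const]
  simp [measure_univ]
  ring

lemma meas_ge_le' {f : Ω → ℝ} (hf : Integrable f ℙ) (h0 : ∀ ω, 0 ≤ f ω) {b : ℝ}
    (hb : 0 < b) : ℙ {ω | b ≤ f ω} ≤ ENNReal.ofReal ((∫ ω, f ω) / b) := by
  have h := mul_meas_ge_le_integral_of_nonneg (Filter.Eventually.of_forall h0) hf b
  rw [← ENNReal.ofReal_toReal (measure_ne_top ℙ {ω | b ≤ f ω})]
  apply ENNReal.ofReal_le_ofReal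
  rw [le_div_iff₀ hb]
  rw [measureReal_def] at h
  linarith

end auxCH

set_option maxHeartbeats 1000000 in
theorem stmt_5 {Ω : Type*} [MeasureSpace Ω] [IsProbabilityMeasure (ℙ : Measure Ω)]
    (Y : ℕ → Ω → ℝ) (m C : ℝ) (hm : 0 ≤ m)
    (hmeas : ∀ n, Measurable (Y n))
    (hpos : ∀ n, ∀ ω, 0 ≤ Y n ω)
    (hL2 : ∀ n, MemLp (Y n) 2 ℙ)
    (hmean : ∀ n, (∫ ω, Y n ω) = m)
    (hvar : ∀ n, cov (Y n) (Y n) ≤ C)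
    (hcov : ∀ ε > 0, ∃ K : ℕ, ∀ i j : ℕ, K ≤ ((i : ℤ) - (j : ℤ)).natAbs →
      |cov (Y i) (Y j)| ≤ ε)
    (D : Ω → ℝ) (hDmeas : Measurable D) (hDpos : ∀ ω, 0 ≤ D ω)
    (hDint : Integrable D ℙ) :
    ∀ δ > 0,
      Tendsto (fun N : ℕ =>
          ℙ {ω | δ < |(((∑ n ∈ Finset.Icc 1 N, Y n ω) + D ω) / (N : ℝ)) ^ 2 - m ^ 2|})
        atTop (nhds 0) := by
  -- centered variables
  obtain ⟨Z, hZdef⟩ : ∃ Z : ℕ → Ω → ℝ, Z = fun n ω => Y n ω - m := ⟨_, rfl⟩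
  have hZL2 : ∀ n, MemLp (Z n) 2 ℙ := by
    intro n; rw [hZdef]; exact (hL2 n).sub (memLp_const m)
  have hZint : ∀ i j, Integrable (fun ω => Z i ω * Z j ω) ℙ := fun i j =>
    integrable_mul_of_memL2' (hZL2 i) (hZL2 j)
  have hcovZ : ∀ i j, cov (Y i) (Y j) = ∫ ω, Z i ω * Z j ω := by
    intro i j
    rw [cov_eq_integral' (hL2 i) (hL2 j), hmean i, hmean j]
    simp only [hZdef]
  have hvarZ : ∀ n, 0 ≤ cov (Y n) (Y n) := fun n => by
    rw [hcovZ]; exact integral_nonneg fun ω => mul_self_nonneg _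
  have hC : 0 ≤ C := le_trans (hvarZ 0) (hvar 0)
  have hZsq : ∀ n, Integrable (fun ω => Z n ω ^ 2) ℙ := fun n => (hZL2 n).integrable_sq
  have hcovC : ∀ i j, |cov (Y i) (Y j)| ≤ C := by
    intro i j
    rw [hcovZ]
    calc |∫ ω, Z i ω * Z j ω| ≤ ∫ ω, |Z i ω| * |Z j ω| := by
          simpa [Real.norm_eq_abs, abs_mul] using
            norm_integral_le_integral_norm (fun ω => Z i ω * Z j ω)
      _ ≤ ∫ ω, (Z i ω ^ 2 + Z j ω ^ 2) / 2 := by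
          refine integral_mono (by simpa [abs_mul] using (hZint i j).abs)
            (((hZsq i).add (hZsq j)).div_const 2) ?_
          intro ω
          dsimp only
          nlinarith [sq_nonneg (|Z i ω| - |Z j ω|), sq_abs (Z i ω), sq_abs (Z j ω),
            abs_nonneg (Z i ω), abs_nonneg (Z j ω), abs_mul (Z i ω) (Z j ω)]
      _ = ((∫ ω, Z i ω ^ 2) + ∫ ω, Z j ω ^ 2) / 2 := by
          rw [integral_div, integral_add (hZsq i) (hZsq j)]
      _ ≤ C := by
          have hi := hvar i; have hj := hvar j
          rw [hcovZ i i] at hi; rw [hcovZ j j] at hj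
          simp only [← pow_two] at hi hj
          linarith
  intro δ hδ
  set η : ℝ := min 1 (δ / (1 + 2 * m)) with hηdef
  have h12m : (0:ℝ) < 1 + 2 * m := by linarith
  have hη : 0 < η := lt_min one_pos (div_pos hδ h12m)
  have hη1 : η ≤ 1 := min_le_left _ _
  have hηδ : η * (1 + 2 * m) ≤ δ := by
    have h2 : η ≤ δ / (1 + 2 * m) := min_le_right _ _
    calc η * (1 + 2 * m) ≤ (δ / (1 + 2 * m)) * (1 + 2 * m) := by nlinarith
      _ = δ := div_mul_cancel₀ _ (ne_of_gt h12m)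
  rw [ENNReal.tendsto_nhds_zero]
  intro ε hε
  have hmin0 : (0 : ℝ≥0∞) < min 1 ε := lt_min one_pos hε
  have hmintop : min 1 ε ≠ ⊤ := (lt_of_le_of_lt (min_le_left _ _) ENNReal.one_lt_top).ne
  set r : ℝ := (min 1 ε).toReal with hrdef
  have hrpos : 0 < r := ENNReal.toReal_pos hmin0.ne' hmintop
  have hrle : ENNReal.ofReal r ≤ ε := by
    rw [hrdef, ENNReal.ofReal_toReal hmintop]; exact min_le_right _ _
  obtain ⟨K, hK⟩ := hcov (η ^ 2 * r / 16) (by positivity)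
  -- variance of the centered sum
  have hWint : ∀ N : ℕ, Integrable (fun ω => (∑ n ∈ Finset.Icc 1 N, Z n ω) ^ 2) ℙ := by
    intro N
    have hexp : (fun ω => (∑ n ∈ Finset.Icc 1 N, Z n ω) ^ 2)
        = fun ω => ∑ i ∈ Finset.Icc 1 N, ∑ j ∈ Finset.Icc 1 N, Z i ω * Z j ω := by
      funext ω; rw [sq, Finset.sum_mul_sum]
    rw [hexp]
    exact integrable_finset_sum _ fun i _ => integrable_finset_sum _ fun j _ => hZint i j
  have hWvar : ∀ N : ℕ,
      (∫ ω, (∑ n ∈ Finset.Icc 1 N, Z n ω) ^ 2) ≤ 2 * K * C * N + (η ^ 2 * r / 16) * N ^ 2 := by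
    intro N
    have hexp : (fun ω => (∑ n ∈ Finset.Icc 1 N, Z n ω) ^ 2)
        = fun ω => ∑ i ∈ Finset.Icc 1 N, ∑ j ∈ Finset.Icc 1 N, Z i ω * Z j ω := by
      funext ω; rw [sq, Finset.sum_mul_sum]
    rw [hexp, integral_finset_sum _
      (fun i _ => integrable_finset_sum _ fun j _ => hZint i j)]
    have hswap : ∀ i, (∫ ω, ∑ j ∈ Finset.Icc 1 N, Z i ω * Z j ω)
        = ∑ j ∈ Finset.Icc 1 N, cov (Y i) (Y j) := by
      intro i
      rw [integral_finset_sum _ fun j _ => hZint i j]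
      exact Finset.sum_congr rfl fun j _ => (hcovZ i j).symm
    rw [Finset.sum_congr rfl fun i _ => hswap i]
    have hinner : ∀ i, (∑ j ∈ Finset.Icc 1 N, cov (Y i) (Y j))
        ≤ 2 * K * C + (η ^ 2 * r / 16) * N := by
      intro i
      classical
      set s1 := (Finset.Icc 1 N).filter
        (fun j : ℕ => ((i : ℤ) - (j : ℤ)).natAbs < K) with hs1
      set s2 := (Finset.Icc 1 N).filter
        (fun j : ℕ => ¬((i : ℤ) - (j : ℤ)).natAbs < K) with hs2
      have hsplit : (∑ j ∈ Finset.Icc 1 N, cov (Y i) (Y j))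
          = (∑ j ∈ s1, cov (Y i) (Y j)) + ∑ j ∈ s2, cov (Y i) (Y j) :=
        (Finset.sum_filter_add_sum_filter_not _ _ _).symm
      have hcard1 : s1.card ≤ 2 * K := by
        have hsubs : s1 ⊆ Finset.Icc (i + 1 - K) (i + K) := by
          intro j hj
          simp only [hs1, Finset.mem_filter, Finset.mem_Icc] at hj ⊢
          omega
        calc s1.card ≤ (Finset.Icc (i + 1 - K) (i + K)).card :=
            Finset.card_le_card hsubs
          _ ≤ 2 * K := by rw [Nat.card_Icc]; omega
      have hcard2 : s2.card ≤ N :=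
        le_trans (Finset.card_filter_le _ _) (by rw [Nat.card_Icc]; omega)
      have hb1 : (∑ j ∈ s1, cov (Y i) (Y j)) ≤ 2 * K * C := by
        calc (∑ j ∈ s1, cov (Y i) (Y j)) ≤ ∑ _j ∈ s1, C :=
            Finset.sum_le_sum fun j _ => le_trans (le_abs_self _) (hcovC i j)
          _ = (s1.card : ℝ) * C := by rw [Finset.sum_const, nsmul_eq_mul]
          _ ≤ ((2 * K : ℕ) : ℝ) * C :=
            mul_le_mul_of_nonneg_right (by exact_mod_cast hcard1) hC
          _ = 2 * K * C := by push_cast; ring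
      have hb2 : (∑ j ∈ s2, cov (Y i) (Y j)) ≤ (η ^ 2 * r / 16) * N := by
        have h1 : ∀ j ∈ s2, cov (Y i) (Y j) ≤ η ^ 2 * r / 16 := by
          intro j hj
          simp only [hs2, Finset.mem_filter, not_lt] at hj
          exact le_trans (le_abs_self _) (hK i j hj.2)
        have h2 := Finset.sum_le_sum h1
        rw [Finset.sum_const, nsmul_eq_mul] at h2
        have h3 : (s2.card : ℝ) * (η ^ 2 * r / 16) ≤ (N : ℝ) * (η ^ 2 * r / 16) :=
          mul_le_mul_of_nonneg_right (by exact_mod_cast hcard2) (by positivity)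
        nlinarith [h2, h3]
      rw [hsplit]; linarith
    calc _ ≤ ∑ _i ∈ Finset.Icc 1 N, (2 * K * C + (η ^ 2 * r / 16) * N) :=
        Finset.sum_le_sum fun i _ => hinner i
      _ = N * (2 * K * C + (η ^ 2 * r / 16) * N) := by
          rw [Finset.sum_const, Nat.card_Icc, Nat.add_sub_cancel, nsmul_eq_mul]
      _ = 2 * K * C * N + (η ^ 2 * r / 16) * N ^ 2 := by ring
  -- eventual smallness
  have hDI : 0 ≤ ∫ ω, D ω := integral_nonneg hDpos
  have t1 : Tendsto (fun N : ℕ => (8 * K * C / η ^ 2) / N) atTop (nhds 0) :=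
    tendsto_const_div_atTop_nhds_zero_nat _
  have t2 : Tendsto (fun N : ℕ => (2 * (∫ ω, D ω) / η) / N) atTop (nhds 0) :=
    tendsto_const_div_atTop_nhds_zero_nat _
  have e1 := t1.eventually (gt_mem_nhds (by positivity : (0:ℝ) < r / 4))
  have e2 := t2.eventually (gt_mem_nhds (by positivity : (0:ℝ) < r / 4))
  filter_upwards [eventually_ge_atTop 1, e1, e2] with N hN1 hN2 hN3
  have hNpos : (0:ℝ) < N := by exact_mod_cast hN1
  set W : Ω → ℝ := fun ω => ∑ n ∈ Finset.Icc 1 N, Z n ω with hWdef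
  have hb : (0:ℝ) < (N:ℝ) * η / 2 := by positivity
  -- set inclusion
  have hsub : {ω | δ < |(((∑ n ∈ Finset.Icc 1 N, Y n ω) + D ω) / (N : ℝ)) ^ 2 - m ^ 2|}
      ⊆ {ω | ((N:ℝ) * η / 2) ^ 2 ≤ W ω ^ 2} ∪ {ω | (N:ℝ) * η / 2 ≤ D ω} := by
    intro ω hω
    rw [Set.mem_union]
    by_contra h
    push_neg at h
    obtain ⟨h1, h2⟩ := h
    simp only [Set.mem_setOf_eq, not_le] at h1 h2
    have habsW : |W ω| < (N:ℝ) * η / 2 := by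
      nlinarith [sq_abs (W ω), abs_nonneg (W ω)]
    have hsum : (∑ n ∈ Finset.Icc 1 N, Y n ω) = W ω + N * m := by
      rw [hWdef]
      simp only [hZdef]
      rw [Finset.sum_sub_distrib, Finset.sum_const, Nat.card_Icc]
      simp
    set S : ℝ := ((∑ n ∈ Finset.Icc 1 N, Y n ω) + D ω) / N with hSdef
    have hS : |S - m| < η := by
      have hSm : S - m = (W ω + D ω) / N := by
        rw [hSdef, hsum]; field_simp; ring
      rw [hSm, abs_div, abs_of_pos hNpos, div_lt_iff₀ hNpos]
      calc |W ω + D ω| ≤ |W ω| + |D ω| := abs_add_le _ _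
        _ < (N:ℝ) * η / 2 + (N:ℝ) * η / 2 := by
            rw [abs_of_nonneg (hDpos ω)]; exact add_lt_add habsW h2
        _ = η * N := by ring
    have hcontra : |S ^ 2 - m ^ 2| ≤ δ := by
      have hsm : |S + m| ≤ |S - m| + 2 * m := by
        calc |S + m| = |(S - m) + 2 * m| := by ring_nf
          _ ≤ |S - m| + |2 * m| := abs_add_le _ _
          _ = |S - m| + 2 * m := by rw [abs_of_nonneg (by linarith : (0:ℝ) ≤ 2 * m)]
      calc |S ^ 2 - m ^ 2| = |S - m| * |S + m| := by
            rw [← abs_mul]; ring_nf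
        _ ≤ η * (η + 2 * m) := by nlinarith [abs_nonneg (S - m), abs_nonneg (S + m)]
        _ ≤ η * (1 + 2 * m) := by nlinarith
        _ ≤ δ := hηδ
    rw [Set.mem_setOf_eq] at hω
    exact absurd hω (not_lt.mpr hcontra)
  -- Chebyshev and Markov bounds
  have hcheb : ℙ {ω | ((N:ℝ) * η / 2) ^ 2 ≤ W ω ^ 2}
      ≤ ENNReal.ofReal ((2 * K * C * N + (η ^ 2 * r / 16) * N ^ 2) / ((N:ℝ) * η / 2) ^ 2) := by
    refine le_trans (meas_ge_le' (hWint N) (fun ω => sq_nonneg _) (by positivity)) ?_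
    exact ENNReal.ofReal_le_ofReal
      (div_le_div_of_nonneg_right (hWvar N) (by positivity))
  have hmark : ℙ {ω | (N:ℝ) * η / 2 ≤ D ω}
      ≤ ENNReal.ofReal ((∫ ω, D ω) / ((N:ℝ) * η / 2)) := meas_ge_le' hDint hDpos hb
  have hx : (0:ℝ) ≤ (2 * K * C * N + (η ^ 2 * r / 16) * N ^ 2) / ((N:ℝ) * η / 2) ^ 2 := by
    positivity
  calc ℙ {ω | δ < |(((∑ n ∈ Finset.Icc 1 N, Y n ω) + D ω) / (N : ℝ)) ^ 2 - m ^ 2|}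
      ≤ ℙ ({ω | ((N:ℝ) * η / 2) ^ 2 ≤ W ω ^ 2} ∪ {ω | (N:ℝ) * η / 2 ≤ D ω}) :=
        measure_mono hsub
    _ ≤ ℙ {ω | ((N:ℝ) * η / 2) ^ 2 ≤ W ω ^ 2} + ℙ {ω | (N:ℝ) * η / 2 ≤ D ω} :=
        measure_union_le _ _
    _ ≤ ENNReal.ofReal ((2 * K * C * N + (η ^ 2 * r / 16) * N ^ 2) / ((N:ℝ) * η / 2) ^ 2)
        + ENNReal.ofReal ((∫ ω, D ω) / ((N:ℝ) * η / 2)) := add_le_add hcheb hmark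
    _ = ENNReal.ofReal ((2 * K * C * N + (η ^ 2 * r / 16) * N ^ 2) / ((N:ℝ) * η / 2) ^ 2
        + (∫ ω, D ω) / ((N:ℝ) * η / 2)) := (ENNReal.ofReal_add hx (by positivity)).symm
    _ ≤ ENNReal.ofReal r := by
        apply ENNReal.ofReal_le_ofReal
        have hxeq : (2 * K * C * N + (η ^ 2 * r / 16) * N ^ 2) / ((N:ℝ) * η / 2) ^ 2
            = (8 * K * C / η ^ 2) / N + r / 4 := by
          field_simp
          ring
        have hyeq : (∫ ω, D ω) / ((N:ℝ) * η / 2) = (2 * (∫ ω, D ω) / η) / N := by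
          field_simp
        rw [hxeq, hyeq]
        linarith
    _ ≤ ε := hrle
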